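/- arXiv:0802.2035 — 2 statements merged into one kernel-verified Lean document; each statement's English description precedes it below -/
import Mathlib

section
/- Let G be a group containing an infinite cyclic subgroup of index 2 (i.e., a subgroup of index 2 that is isomorphic to ℤ). Then G is isomorphic to ℤ, to ℤ × ℤ/2, or to the free product ℤ/2 * ℤ/2 of two copies of the cyclic group of order 2. -/
open Multiplicative

/-- The canonical hom from `Multiplicative (ZMod 2)` determined by an element of square one. -/
private def C2hom {G : Type*} [Monoid G] (t : G) (ht : t ^ 2 = 1) :
    Multiplicative (ZMod 2) →* G where
  toFun x := t ^ (x.toAdd).val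
  map_one' := by
    show t ^ (ZMod.val (0 : ZMod 2)) = 1
    simp
  map_mul' x y := by
    show t ^ ((x.toAdd + y.toAdd).val) = t ^ (x.toAdd).val * t ^ (y.toAdd).val
    rw [ZMod.val_add, ← pow_eq_pow_mod _ ht, pow_add]

private lemma C2hom_apply {G : Type*} [Monoid G] (t : G) (ht : t ^ 2 = 1) :
    C2hom t ht (ofAdd 1) = t := by
  show t ^ (ZMod.val (1 : ZMod 2)) = t
  have : ZMod.val (1 : ZMod 2) = 1 := rfl
  rw [this, pow_one]

private lemma zpow_inj_of_inj {G : Type*} [Group G] {h : G}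
    (hinj : ∀ n : ℤ, h ^ n = 1 → n = 0) {a b : ℤ} (hab : h ^ a = h ^ b) : a = b := by
  have : h ^ (a - b) = 1 := by
    rw [zpow_sub, hab, mul_inv_cancel]
  have := hinj _ this
  omega

private lemma aux_cyclic {G : Type*} [Group G] (g : G)
    (hinj : ∀ n : ℤ, g ^ n = 1 → n = 0)
    (hsurj : ∀ x : G, ∃ n : ℤ, x = g ^ n) :
    Nonempty (G ≃* Multiplicative ℤ) := by
  let f : Multiplicative ℤ →* G :=
    { toFun := fun n => g ^ n.toAdd
      map_one' := by simp
      map_mul' := fun x y => by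
        show g ^ (x.toAdd + y.toAdd) = g ^ x.toAdd * g ^ y.toAdd
        rw [zpow_add] }
  have hbij : Function.Bijective f := by
    constructor
    · intro x y hxy
      have := zpow_inj_of_inj hinj hxy
      exact Multiplicative.toAdd.injective this
    · intro x
      obtain ⟨n, hn⟩ := hsurj x
      exact ⟨ofAdd n, hn.symm⟩
  exact ⟨(MulEquiv.ofBijective f hbij).symm⟩

private lemma aux_prod {G : Type*} [Group G] (h u : G)
    (hc : Commute h u) (hu2 : u ^ 2 = 1)
    (hinj : ∀ n : ℤ, h ^ n = 1 → n = 0)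
    (hu : ∀ n : ℤ, u ≠ h ^ n)
    (hsurj : ∀ x : G, (∃ n : ℤ, x = h ^ n) ∨ (∃ n : ℤ, x = h ^ n * u)) :
    Nonempty (G ≃* Multiplicative (ℤ × ZMod 2)) := by
  let f : Multiplicative (ℤ × ZMod 2) →* G :=
    { toFun := fun p => h ^ (p.toAdd.1) * u ^ (p.toAdd.2.val)
      map_one' := by
        show h ^ ((0 : ℤ)) * u ^ (ZMod.val (0 : ZMod 2)) = 1
        simp
      map_mul' := fun p q => by
        show h ^ (p.toAdd.1 + q.toAdd.1) * u ^ ((p.toAdd.2 + q.toAdd.2).val)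
            = (h ^ p.toAdd.1 * u ^ (p.toAdd.2).val) * (h ^ q.toAdd.1 * u ^ (q.toAdd.2).val)
        rw [ZMod.val_add, ← pow_eq_pow_mod _ hu2, pow_add, zpow_add]
        have hcom : u ^ (p.toAdd.2).val * h ^ q.toAdd.1 = h ^ q.toAdd.1 * u ^ (p.toAdd.2).val :=
          ((hc.zpow_left q.toAdd.1).pow_right _).symm.eq
        calc h ^ p.toAdd.1 * h ^ q.toAdd.1 * (u ^ (p.toAdd.2).val * u ^ (q.toAdd.2).val)
            = h ^ p.toAdd.1 * ((h ^ q.toAdd.1 * u ^ (p.toAdd.2).val) * u ^ (q.toAdd.2).val) := by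
              group
          _ = h ^ p.toAdd.1 * ((u ^ (p.toAdd.2).val * h ^ q.toAdd.1) * u ^ (q.toAdd.2).val) := by
              rw [hcom]
          _ = (h ^ p.toAdd.1 * u ^ (p.toAdd.2).val) * (h ^ q.toAdd.1 * u ^ (q.toAdd.2).val) := by
              group }
  have hval : ∀ ε δ : ZMod 2, ε = δ ∨ (ε.val = 0 ∧ δ.val = 1) ∨ (ε.val = 1 ∧ δ.val = 0) := by
    decide
  have hbij : Function.Bijective f := by
    constructor
    · intro p q hpq
      simp only [f, MonoidHom.coe_mk, OneHom.coe_mk] at hpq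
      have hmem : ∀ a b : ℤ, h ^ a * u = h ^ b → False := by
        intro a b hab
        apply hu (-a + b)
        rw [zpow_add, ← hab]
        group
      rcases hval p.toAdd.2 q.toAdd.2 with heq | ⟨h1, h2⟩ | ⟨h1, h2⟩
      · rw [heq] at hpq
        have := mul_right_cancel hpq
        have h1 := zpow_inj_of_inj hinj this
        exact Multiplicative.toAdd.injective (Prod.ext h1 heq)
      · rw [h1, h2, pow_zero, pow_one, mul_one] at hpq
        exact absurd hpq.symm (fun hh => hmem _ _ hh)
      · rw [h1, h2, pow_zero, pow_one, mul_one] at hpq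
        exact absurd hpq (fun hh => hmem _ _ hh)
    · intro x
      rcases hsurj x with ⟨n, hn⟩ | ⟨n, hn⟩
      · refine ⟨ofAdd (n, 0), ?_⟩
        show h ^ n * u ^ (ZMod.val (0 : ZMod 2)) = x
        simp [hn]
      · refine ⟨ofAdd (n, 1), ?_⟩
        show h ^ n * u ^ (ZMod.val (1 : ZMod 2)) = x
        have hv1 : ZMod.val (1 : ZMod 2) = 1 := rfl
        rw [hv1, pow_one, hn]
  exact ⟨(MulEquiv.ofBijective f hbij).symm⟩

private lemma aux_dinf {G : Type*} [Group G] (h t : G)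
    (ht2 : t ^ 2 = 1)
    (hconj : t * h * t⁻¹ = h⁻¹)
    (hinj : ∀ n : ℤ, h ^ n = 1 → n = 0)
    (htn : ∀ n : ℤ, t ≠ h ^ n)
    (hsurj : ∀ x : G, (∃ n : ℤ, x = h ^ n) ∨ (∃ n : ℤ, x = h ^ n * t)) :
    Nonempty (G ≃* Monoid.Coprod (Multiplicative (ZMod 2)) (Multiplicative (ZMod 2))) := by
  classical
  set K := Monoid.Coprod (Multiplicative (ZMod 2)) (Multiplicative (ZMod 2)) with hK
  set a : K := Monoid.Coprod.inl (ofAdd 1) with ha_def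
  set b : K := Monoid.Coprod.inr (ofAdd 1) with hb_def
  set c : K := a * b with hc_def
  have haddone : (ofAdd (1 : ZMod 2)) * (ofAdd (1 : ZMod 2)) = 1 := by decide
  have ha2 : a * a = 1 := by
    rw [ha_def, ← map_mul, haddone, map_one]
  have hb2 : b * b = 1 := by
    rw [hb_def, ← map_mul, haddone, map_one]
  have hainv : a⁻¹ = a := by
    rw [inv_eq_iff_mul_eq_one, ha2]
  have hbinv : b⁻¹ = b := by
    rw [inv_eq_iff_mul_eq_one, hb2]
  have hcinv : c⁻¹ = b * a := by
    rw [hc_def, mul_inv_rev, hainv, hbinv]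
  have hac : ∀ n : ℤ, a * c ^ n = c ^ (-n) * a := by
    intro n
    have h1 : a * c * a⁻¹ = c⁻¹ := by
      rw [hainv, hcinv, hc_def]
      calc a * (a * b) * a = (a * a) * (b * a) := by group
        _ = b * a := by rw [ha2, one_mul]
    have h2 : a * c ^ n * a⁻¹ = c ^ (-n) := by
      rw [← conj_zpow, h1, ← zpow_neg_one, ← zpow_mul]
      norm_num
    calc a * c ^ n = (a * c ^ n * a⁻¹) * a := by rw [inv_mul_cancel_right]
      _ = c ^ (-n) * a := by rw [h2]
  have hth : ∀ n : ℤ, t * h ^ n = h ^ (-n) * t := by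
    intro n
    have h2 : t * h ^ n * t⁻¹ = h ^ (-n) := by
      rw [← conj_zpow, hconj, ← zpow_neg_one, ← zpow_mul]
      norm_num
    calc t * h ^ n = (t * h ^ n * t⁻¹) * t := by group
      _ = h ^ (-n) * t := by rw [h2]
  have htt : t * t = 1 := by rw [← pow_two]; exact ht2
  have htinv : t⁻¹ = t := by rw [inv_eq_iff_mul_eq_one, htt]
  have hnotp : ∀ n m : ℤ, h ^ n * t ≠ h ^ m := by
    intro n m hnm
    apply htn (-n + m)
    rw [zpow_add, ← hnm]
    group
  -- normal form exponent
  let P : G → Prop := fun x => ∃ n : ℤ, x = h ^ n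
  let L : G → ℤ := fun x => if hx : P x then hx.choose else 0
  have hL : ∀ (x : G) (n : ℤ), x = h ^ n → L x = n := by
    intro x n hx
    have hPx : P x := ⟨n, hx⟩
    have hspec : x = h ^ (hPx.choose) := hPx.choose_spec
    have : L x = hPx.choose := dif_pos hPx
    rw [this]
    exact zpow_inj_of_inj hinj (by rw [← hspec, ← hx])
  let ψ : G → K := fun x => if P x then c ^ L x else c ^ L (x * t⁻¹) * a
  have hψ_pow : ∀ n : ℤ, ψ (h ^ n) = c ^ n := by
    intro n
    have : P (h ^ n) := ⟨n, rfl⟩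
    simp only [ψ, if_pos this, hL (h ^ n) n rfl]
  have hψ_pt : ∀ n : ℤ, ψ (h ^ n * t) = c ^ n * a := by
    intro n
    have hnp : ¬ P (h ^ n * t) := by
      rintro ⟨m, hm⟩
      exact hnotp n m hm
    have harg : (h ^ n * t) * t⁻¹ = h ^ n := by group
    simp only [ψ, if_neg hnp, harg, hL (h ^ n) n rfl]
  have hψ_mul : ∀ x y : G, ψ (x * y) = ψ x * ψ y := by
    intro x y
    rcases hsurj x with ⟨n, hn⟩ | ⟨n, hn⟩ <;> rcases hsurj y with ⟨m, hm⟩ | ⟨m, hm⟩ <;>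
      subst hn <;> subst hm
    · rw [← zpow_add, hψ_pow, hψ_pow, hψ_pow, zpow_add]
    · have : h ^ n * (h ^ m * t) = h ^ (n + m) * t := by rw [zpow_add]; group
      rw [this, hψ_pt, hψ_pow, hψ_pt, zpow_add]; group
    · have : (h ^ n * t) * h ^ m = h ^ (n + -m) * t := by
        calc (h ^ n * t) * h ^ m = h ^ n * (t * h ^ m) := by group
          _ = h ^ n * (h ^ (-m) * t) := by rw [hth]
          _ = h ^ (n + -m) * t := by rw [zpow_add]; group
      rw [this, hψ_pt, hψ_pt, hψ_pow]
      have hstep : (c ^ n * a) * c ^ m = c ^ (n + -m) * a := by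
        calc (c ^ n * a) * c ^ m = c ^ n * (a * c ^ m) := by group
          _ = c ^ n * (c ^ (-m) * a) := by rw [hac]
          _ = c ^ (n + -m) * a := by rw [← mul_assoc, ← zpow_add]
      rw [hstep]
    · have : (h ^ n * t) * (h ^ m * t) = h ^ (n + -m) := by
        calc (h ^ n * t) * (h ^ m * t) = h ^ n * (t * h ^ m) * t := by group
          _ = h ^ n * (h ^ (-m) * t) * t := by rw [hth]
          _ = h ^ (n + -m) * (t * t) := by rw [zpow_add]; group
          _ = h ^ (n + -m) := by rw [htt, mul_one]
      rw [this, hψ_pow, hψ_pt, hψ_pt]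
      have hstep : (c ^ n * a) * (c ^ m * a) = c ^ (n + -m) := by
        calc (c ^ n * a) * (c ^ m * a) = c ^ n * (a * c ^ m) * a := by group
          _ = c ^ n * (c ^ (-m) * a) * a := by rw [hac]
          _ = c ^ n * c ^ (-m) * (a * a) := by group
          _ = c ^ (n + -m) := by rw [ha2, mul_one, ← zpow_add]
      rw [hstep]
  let Ψ : G →* K :=
    { toFun := ψ
      map_one' := by
        have : (1 : G) = h ^ (0 : ℤ) := by simp
        rw [this, hψ_pow, zpow_zero]
      map_mul' := hψ_mul }
  have hth2 : (t * h) ^ 2 = 1 := by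
    have : (t * h) ^ 2 = (t * h * t⁻¹) * t ^ 2 * h := by rw [pow_two]; group
    rw [this, hconj, ht2]
    group
  let φ : K →* G := Monoid.Coprod.lift (C2hom t ht2) (C2hom (t * h) hth2)
  have hφa : φ a = t := by
    rw [ha_def]
    show φ (Monoid.Coprod.inl (ofAdd 1)) = t
    rw [Monoid.Coprod.lift_apply_inl, C2hom_apply]
  have hφb : φ b = t * h := by
    rw [hb_def]
    show φ (Monoid.Coprod.inr (ofAdd 1)) = t * h
    rw [Monoid.Coprod.lift_apply_inr, C2hom_apply]
  have hφc : φ c = h := by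
    rw [hc_def, map_mul, hφa, hφb, ← mul_assoc, htt, one_mul]
  have hleft : ∀ x : G, φ (Ψ x) = x := by
    intro x
    rcases hsurj x with ⟨n, hn⟩ | ⟨n, hn⟩ <;> subst hn
    · show φ (ψ (h ^ n)) = h ^ n
      rw [hψ_pow, map_zpow, hφc]
    · show φ (ψ (h ^ n * t)) = h ^ n * t
      rw [hψ_pt, map_mul, map_zpow, hφc, hφa]
  have hcases : ∀ y : Multiplicative (ZMod 2), y = 1 ∨ y = ofAdd 1 := by decide
  have hcomp : Ψ.comp φ = MonoidHom.id K := by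
    apply Monoid.Coprod.hom_ext
    · refine MonoidHom.ext fun x => ?_
      rcases hcases x with hx | hx <;> subst hx
      · simp
      · show Ψ (φ (Monoid.Coprod.inl (ofAdd 1))) = Monoid.Coprod.inl (ofAdd 1)
        rw [Monoid.Coprod.lift_apply_inl, C2hom_apply]
        show ψ t = a
        have : t = h ^ (0 : ℤ) * t := by simp
        rw [this, hψ_pt, zpow_zero, one_mul]
    · refine MonoidHom.ext fun x => ?_
      rcases hcases x with hx | hx <;> subst hx
      · simp
      · show Ψ (φ (Monoid.Coprod.inr (ofAdd 1))) = Monoid.Coprod.inr (ofAdd 1)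
        rw [Monoid.Coprod.lift_apply_inr, C2hom_apply]
        show ψ (t * h) = b
        have h1 : t * h = h ^ (-1 : ℤ) * t := by
          have := hth 1
          rw [zpow_one] at this
          exact this
        rw [h1, hψ_pt]
        rw [zpow_neg_one, hcinv]
        rw [mul_assoc, ha2, mul_one]
  have hright : ∀ k : K, Ψ (φ k) = k := by
    intro k
    exact DFunLike.congr_fun hcomp k
  exact ⟨{ toFun := Ψ, invFun := φ, left_inv := hleft, right_inv := hright,
           map_mul' := hψ_mul }⟩

/-- A group containing an infinite cyclic subgroup of index 2 is isomorphic to `ℤ`,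
`ℤ × ℤ/2`, or the free product `ℤ/2 * ℤ/2`. -/
theorem group_with_index_two_infinite_cyclic_subgroup (G : Type*) [Group G]
    (H : Subgroup G) (hidx : H.index = 2) (hZ : Nonempty (H ≃* Multiplicative ℤ)) :
    Nonempty (G ≃* Multiplicative ℤ) ∨
    Nonempty (G ≃* Multiplicative (ℤ × ZMod 2)) ∨
    Nonempty (G ≃* Monoid.Coprod (Multiplicative (ZMod 2)) (Multiplicative (ZMod 2))) := by
  classical
  obtain ⟨e⟩ := hZ
  set h : G := ((e.symm (ofAdd 1) : H) : G) with hh_def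
  have hh : h ∈ H := (e.symm (ofAdd 1)).2
  have hsub : (⟨h, hh⟩ : H) = e.symm (ofAdd 1) := rfl
  have hofAdd_pow : ∀ n : ℤ, (ofAdd (1 : ℤ)) ^ n = ofAdd n := by
    intro n
    apply Multiplicative.toAdd.injective
    rw [toAdd_zpow]
    simp
  have hmem : ∀ x : G, x ∈ H → ∃ n : ℤ, x = h ^ n := by
    intro x hx
    refine ⟨(e ⟨x, hx⟩).toAdd, ?_⟩
    have h1 : e.symm (ofAdd (e ⟨x, hx⟩).toAdd) = ⟨x, hx⟩ := by simp
    have h2 : e.symm (ofAdd (e ⟨x, hx⟩).toAdd) = (⟨h, hh⟩ : H) ^ (e ⟨x, hx⟩).toAdd := by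
      rw [← hofAdd_pow, map_zpow, hsub]
    have := h1.symm.trans h2
    have := congrArg (Subtype.val) this
    simpa using this
  have hinj : ∀ n : ℤ, h ^ n = 1 → n = 0 := by
    intro n hn
    have h1 : ((⟨h, hh⟩ : H) ^ n) = 1 := by
      apply Subtype.ext
      simpa using hn
    have h2 := congrArg e h1
    rw [map_zpow, map_one, hsub, MulEquiv.apply_symm_apply] at h2
    rw [hofAdd_pow] at h2
    have := congrArg Multiplicative.toAdd h2
    simpa using this
  obtain ⟨t, hxor⟩ := Subgroup.index_eq_two_iff.mp hidx
  have htH : t ∉ H := by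
    have := hxor 1
    rw [one_mul] at this
    rcases this with ⟨_, h2⟩ | ⟨_, h2⟩
    · exact fun ht => h2 (one_mem H)
    · exact h2
  have ht2H : t * t ∈ H := by
    rcases hxor t with ⟨h1, _⟩ | ⟨h1, _⟩
    · exact h1
    · exact absurd h1 htH
  have htinvH : t⁻¹ ∉ H := fun ht => htH (by simpa using inv_mem ht)
  have hconjH : ∀ x ∈ H, t * x * t⁻¹ ∈ H := by
    intro x hx
    have htx : t * x ∉ H := by
      intro hmem'
      exact htH (by simpa using mul_mem hmem' (inv_mem hx))
    rcases hxor (t * x) with ⟨h1, _⟩ | ⟨h1, _⟩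
    · have : t * x * t⁻¹ = (t * x * t) * (t * t)⁻¹ := by group
      rw [this]
      exact mul_mem h1 (inv_mem ht2H)
    · exact absurd h1 htx
  have hconjH' : ∀ x ∈ H, t⁻¹ * x * t ∈ H := by
    intro x hx
    have htx : t⁻¹ * x ∉ H := by
      intro hmem'
      exact htinvH (by simpa using mul_mem hmem' (inv_mem hx))
    rcases hxor (t⁻¹ * x) with ⟨h1, _⟩ | ⟨h1, _⟩
    · exact h1
    · exact absurd h1 htx
  have hcoset : ∀ g : G, g ∉ H → ∃ n : ℤ, g = h ^ n * t := by
    intro g hg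
    have hgt : g * t ∈ H := by
      rcases hxor g with ⟨h1, _⟩ | ⟨h1, _⟩
      · exact h1
      · exact absurd h1 hg
    have hx : g * t * (t * t)⁻¹ ∈ H := mul_mem hgt (inv_mem ht2H)
    obtain ⟨n, hn⟩ := hmem _ hx
    refine ⟨n, ?_⟩
    rw [← hn]
    group
  -- conjugation dichotomy
  obtain ⟨kk, hk⟩ := hmem _ (hconjH h hh)
  obtain ⟨ll, hl⟩ := hmem _ (hconjH' h hh)
  have hlk : ll * kk = 1 := by
    have h2 : h = t⁻¹ * h ^ kk * (t⁻¹)⁻¹ := by rw [inv_inv, ← hk]; group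
    rw [← conj_zpow, inv_inv, hl, ← zpow_mul] at h2
    have h3 := zpow_inj_of_inj hinj (a := (1 : ℤ)) (b := ll * kk) (by rw [zpow_one, ← h2])
    omega
  have hkk : kk = 1 ∨ kk = -1 := by
    rcases Int.eq_one_or_neg_one_of_mul_eq_one' hlk with ⟨_, h2⟩ | ⟨_, h2⟩
    · exact Or.inl h2
    · exact Or.inr h2
  obtain ⟨m, hm⟩ := hmem _ ht2H
  rcases hkk with hkk | hkk
  · -- commuting case
    rw [hkk, zpow_one] at hk
    have cht : Commute t h := by
      show t * h = h * t
      calc t * h = (t * h * t⁻¹) * t := by group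
        _ = h * t := by rw [hk]
    have hprod : ∀ i j : ℤ, (h ^ i * t) * (h ^ j * t) = h ^ (i + j) * (t * t) := by
      intro i j
      calc (h ^ i * t) * (h ^ j * t) = h ^ i * (t * h ^ j) * t := by group
        _ = h ^ i * (h ^ j * t) * t := by rw [(cht.zpow_right j).eq]
        _ = h ^ (i + j) * (t * t) := by rw [zpow_add]; group
    rcases Int.even_or_odd m with ⟨j, hj⟩ | ⟨j, hj⟩
    · -- ℤ × ZMod 2
      set u : G := h ^ (-j) * t with hu_def
      have htu : t = h ^ j * u := by rw [hu_def, ← mul_assoc, ← zpow_add]; norm_num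
      have hcu : Commute h u :=
        ((Commute.refl h).zpow_right (-j)).mul_right cht.symm
      have hu2 : u ^ 2 = 1 := by
        have hz : (-j) + (-j) + (j + j) = 0 := by ring
        rw [pow_two, hu_def, hprod, hm, hj, ← zpow_add, hz, zpow_zero]
      have hu_ne : ∀ n : ℤ, u ≠ h ^ n := by
        intro n hn
        exact htH (by rw [htu, hn, ← zpow_add]; exact zpow_mem hh _)
      have hsurj' : ∀ x : G, (∃ n : ℤ, x = h ^ n) ∨ (∃ n : ℤ, x = h ^ n * u) := by
        intro x
        by_cases hx : x ∈ H
        · exact Or.inl (hmem x hx)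
        · obtain ⟨n, hn⟩ := hcoset x hx
          exact Or.inr ⟨n + j, by rw [hn, htu, ← mul_assoc, ← zpow_add]⟩
      exact Or.inr (Or.inl (aux_prod h u hcu hu2 hinj hu_ne hsurj'))
    · -- infinite cyclic
      set g0 : G := h ^ (-j) * t with hg0_def
      have htg0 : t = h ^ j * g0 := by
        rw [hg0_def, ← mul_assoc, ← zpow_add]
        norm_num
      have hg02 : g0 ^ (2 : ℤ) = h := by
        have hz : (-j) + (-j) + (2 * j + 1) = 1 := by ring
        rw [zpow_two, hg0_def, hprod, hm, hj, ← zpow_add, hz, zpow_one]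
      have hinj0 : ∀ n : ℤ, g0 ^ n = 1 → n = 0 := by
        intro n hn
        have : h ^ n = 1 := by
          rw [← hg02, ← zpow_mul, mul_comm, zpow_mul, hn, one_zpow]
        have := hinj n this
        omega
      have hsurj0 : ∀ x : G, ∃ n : ℤ, x = g0 ^ n := by
        intro x
        by_cases hx : x ∈ H
        · obtain ⟨n, hn⟩ := hmem x hx
          exact ⟨2 * n, by rw [hn, zpow_mul, hg02]⟩
        · obtain ⟨n, hn⟩ := hcoset x hx
          refine ⟨2 * (n + j) + 1, ?_⟩
          rw [zpow_add, zpow_one, zpow_mul, hg02, hn, htg0, ← mul_assoc, ← zpow_add]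
      exact Or.inl (aux_cyclic g0 hinj0 hsurj0)
  · -- dihedral case
    rw [hkk] at hk
    have hconj : t * h * t⁻¹ = h⁻¹ := by rw [hk, zpow_neg_one]
    have hm0 : m = 0 := by
      have h1 : t * (h ^ m) * t⁻¹ = h ^ (-m) := by
        rw [← conj_zpow, hconj, ← zpow_neg_one, ← zpow_mul]
        norm_num
      have h2 : t * (t * t) * t⁻¹ = t * t := by group
      rw [← hm] at h1
      rw [h2, hm] at h1
      have := zpow_inj_of_inj hinj h1
      omega
    have ht2 : t ^ 2 = 1 := by
      rw [pow_two, hm, hm0, zpow_zero]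
    have htn : ∀ n : ℤ, t ≠ h ^ n := by
      intro n hn
      exact htH (by rw [hn]; exact zpow_mem hh _)
    have hsurjB : ∀ x : G, (∃ n : ℤ, x = h ^ n) ∨ (∃ n : ℤ, x = h ^ n * t) := by
      intro x
      by_cases hx : x ∈ H
      · exact Or.inl (hmem x hx)
      · exact Or.inr (hcoset x hx)
    exact Or.inr (Or.inr (aux_dinf h t ht2 hconj hinj htn hsurjB))
end

section
/- Let G be a group, let t ∈ G be an element of infinite order (i.e., ¬ IsOfFinOrder t), and let x ∈ G satisfy x * t * x⁻¹ = t⁻¹ and x² ∈ ⟨t⟩, where ⟨t⟩ is the cyclic subgroup generated by t. Then x² = 1. -/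
/-- If `t` has infinite order, `x * t * x⁻¹ = t⁻¹` and `x²` is a power of `t`,
then `x² = 1`. -/
theorem sq_eq_one_of_conj_inv (G : Type*) [Group G] (t x : G)
    (ht : ¬ IsOfFinOrder t) (hconj : x * t * x⁻¹ = t⁻¹)
    (hx2 : x ^ 2 ∈ Subgroup.zpowers t) : x ^ 2 = 1 := by
  obtain ⟨k, hk⟩ := hx2
  simp only at hk
  have hconj' : x * t ^ k * x⁻¹ = t ^ (-k) := by
    rw [← conj_zpow, hconj, inv_zpow, zpow_neg]
  have hcomm : x * t ^ k * x⁻¹ = t ^ k := by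
    rw [hk]; group
  have h2k : t ^ (2 * k) = 1 := by
    have : t ^ k = t ^ (-k) := by rw [← hcomm, hconj']
    nth_rewrite 1 [two_mul, zpow_add]
    nth_rewrite 2 [this]
    rw [zpow_neg, mul_inv_cancel]
  have hk0 : (2 : ℤ) * k = 0 := by
    by_contra h
    exact ht (isOfFinOrder_iff_zpow_eq_one.2 ⟨2 * k, h, h2k⟩)
  have : k = 0 := by omega
  rw [← hk, this]; exact zpow_zero t
end
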